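/- Area function K on [alpha_0, alpha_max]: for rho in (1,3) and alpha in [alpha_0, alpha_max] with alpha_0 = arccos((3*rho^2+1)/(rho*(rho^2+3))) and alpha_max = arccos(1/rho), the actual cap and the auxiliary cap coincide and K(alpha) = 2*pi*(1 - cos(alpha)); moreover for alpha in [alpha_min, alpha_0], K(alpha) = 2*pi*(1 - ((rho^2-1)*( (1/rho)*cos(alpha) - sqrt(1 - 1/rho^2)*sin(alpha) + 1) + 4)/(4*rho)), and K is non-decreasing and continuous at alpha_0. -/

import Mathlib

open Real Set

noncomputable def S19F (ρ t α : ℝ) : ℝ :=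
  2 * π * (1 - ((ρ ^ 2 - 1) * ((1 / ρ) * Real.cos α - (t / ρ) * Real.sin α + 1) + 4)
      / (4 * ρ))

noncomputable def S19G (α : ℝ) : ℝ := 2 * π * (1 - Real.cos α)

theorem S19F_cont (ρ t : ℝ) : Continuous (S19F ρ t) := by
  unfold S19F; fun_prop

theorem S19G_cont : Continuous S19G := by
  unfold S19G; fun_prop


set_option maxHeartbeats 2000000 in
/-- the area function `K`.  For `ρ ∈ (1,3)`, set
`α₀ = arccos((3ρ²+1)/(ρ(ρ²+3)))`, `α_max = arccos(1/ρ)`,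
`α_min = arccos((3-ρ)/(1+ρ)) - arccos(1/ρ)`, and let
`K(α) = 2π(1-cos α)` for `α ∈ [α₀, α_max]` (where the actual cap and auxiliary
cap coincide) and
`K(α) = 2π(1 - ((ρ²-1)((1/ρ)cos α - √(1-1/ρ²) sin α + 1) + 4)/(4ρ))`
for `α ∈ [α_min, α₀]`.  Then the two formulas agree at `α₀`, and `K` is
non-decreasing on `[α_min, α_max]` and continuous at `α₀`. -/
theorem stmt19 (ρ : ℝ) (hρ1 : 1 < ρ) (hρ3 : ρ < 3)
    (αmin α₀ αmax : ℝ)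
    (hαmax : αmax = Real.arccos (1 / ρ))
    (hαmin : αmin = Real.arccos ((3 - ρ) / (1 + ρ)) - Real.arccos (1 / ρ))
    (hα₀ : α₀ = Real.arccos ((3 * ρ ^ 2 + 1) / (ρ * (ρ ^ 2 + 3))))
    (K : ℝ → ℝ)
    (hK : ∀ α, K α = if α < α₀ then
        2 * π * (1 - ((ρ ^ 2 - 1) *
          ((1 / ρ) * Real.cos α - Real.sqrt (1 - 1 / ρ ^ 2) * Real.sin α + 1) + 4)
          / (4 * ρ))
      else 2 * π * (1 - Real.cos α)) :
    2 * π * (1 - Real.cos α₀) =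
      2 * π * (1 - ((ρ ^ 2 - 1) *
        ((1 / ρ) * Real.cos α₀ - Real.sqrt (1 - 1 / ρ ^ 2) * Real.sin α₀ + 1) + 4)
        / (4 * ρ)) ∧
    MonotoneOn K (Set.Icc αmin αmax) ∧
    ContinuousAt K α₀ := by
  have hρ0 : 0 < ρ := by linarith
  obtain ⟨t, htdef⟩ : ∃ t : ℝ, t = Real.sqrt (ρ ^ 2 - 1) := ⟨_, rfl⟩
  have ht0 : 0 ≤ t := htdef ▸ Real.sqrt_nonneg _
  have ht2 : t ^ 2 = ρ ^ 2 - 1 := by rw [htdef]; exact Real.sq_sqrt (by nlinarith)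
  have ht4 : t ^ 4 = (ρ ^ 2 - 1) ^ 2 := by rw [show t^4 = (t^2)^2 by ring, ht2]
  have hD : 0 < ρ * (ρ ^ 2 + 3) := by positivity
  obtain ⟨c, hcdef⟩ : ∃ c : ℝ, c = (3 * ρ ^ 2 + 1) / (ρ * (ρ ^ 2 + 3)) := ⟨_, rfl⟩
  rw [← hcdef] at hα₀
  have hc1 : c ≤ 1 := by
    rw [hcdef, div_le_one hD]; nlinarith [pow_pos (sub_pos.2 hρ1) 3]
  have hc0 : 0 ≤ c := by rw [hcdef]; positivity
  have hcos₀ : Real.cos α₀ = c := by rw [hα₀]; exact Real.cos_arccos (by linarith) hc1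
  have hsin₀ : Real.sin α₀ = t ^ 3 / (ρ * (ρ ^ 2 + 3)) := by
    rw [hα₀, Real.sin_arccos]
    rw [show 1 - c ^ 2 = (t ^ 3 / (ρ * (ρ ^ 2 + 3))) ^ 2 by
      rw [hcdef]; field_simp
      linear_combination (-(t ^ 4 + t ^ 2 * (ρ ^ 2 - 1) + (ρ ^ 2 - 1) ^ 2)) * ht2]
    exact Real.sqrt_sq (by positivity)
  have hs : Real.sqrt (1 - 1 / ρ ^ 2) = t / ρ := by
    rw [show 1 - 1 / ρ ^ 2 = (ρ ^ 2 - 1) / ρ ^ 2 by field_simp,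
      Real.sqrt_div (by nlinarith) , Real.sqrt_sq hρ0.le, htdef]
  have key : 2 * π * (1 - Real.cos α₀) =
      2 * π * (1 - ((ρ ^ 2 - 1) *
        ((1 / ρ) * Real.cos α₀ - Real.sqrt (1 - 1 / ρ ^ 2) * Real.sin α₀ + 1) + 4)
        / (4 * ρ)) := by
    rw [hcos₀, hsin₀, hs, hcdef]
    have : ((ρ ^ 2 - 1) *
        ((1 / ρ) * ((3 * ρ ^ 2 + 1) / (ρ * (ρ ^ 2 + 3))) - (t / ρ) * (t ^ 3 / (ρ * (ρ ^ 2 + 3))) + 1) + 4)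
        / (4 * ρ) = (3 * ρ ^ 2 + 1) / (ρ * (ρ ^ 2 + 3)) := by
      field_simp
      linear_combination (1 - ρ^2) * ht4
    rw [this]
  have hπ := Real.pi_pos
  have harccos_anti : ∀ x y : ℝ, x ≤ y → Real.arccos y ≤ Real.arccos x := fun x y h => by
    simp only [Real.arccos_eq_pi_div_two_sub_arcsin]
    linarith [Real.monotone_arcsin h]
  have hmin0 : 0 ≤ αmin := by
    rw [hαmin, sub_nonneg]
    apply harccos_anti
    rw [div_le_div_iff₀ (by linarith) hρ0]
    nlinarith [sq_nonneg (ρ - 1)]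
  have hmax2 : αmax ≤ π / 2 := by
    rw [hαmax]; exact Real.arccos_le_pi_div_two.2 (by positivity)
  have hα₀max : α₀ ≤ αmax := by
    rw [hα₀, hαmax]
    apply harccos_anti
    rw [hcdef, div_le_div_iff₀ hρ0 hD]
    nlinarith
  have hα₀0 : 0 ≤ α₀ := hα₀ ▸ Real.arccos_nonneg _
  have hK' : ∀ α, K α = if α < α₀ then S19F ρ t α else S19G α := fun α => by
    rw [hK, hs]; rfl
  have hfg : S19F ρ t α₀ = S19G α₀ := by
    have h := key; rw [hs] at h; unfold S19F S19G; exact h.symm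
  have hfmono : ∀ x y, 0 ≤ x → x ≤ y → y ≤ π / 2 → S19F ρ t x ≤ S19F ρ t y := by
    intro x y hx hxy hy
    have hcos : Real.cos y ≤ Real.cos x :=
      Real.cos_le_cos_of_nonneg_of_le_pi hx (by linarith) hxy
    have hsin : Real.sin x ≤ Real.sin y :=
      Real.strictMonoOn_sin.monotoneOn ⟨by linarith, by linarith⟩ ⟨by linarith, hy⟩ hxy
    have h1 : (1 / ρ) * Real.cos y ≤ (1 / ρ) * Real.cos x :=
      mul_le_mul_of_nonneg_left hcos (by positivity)
    have h2 : (t / ρ) * Real.sin x ≤ (t / ρ) * Real.sin y :=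
      mul_le_mul_of_nonneg_left hsin (by positivity)
    have hρsq : (0:ℝ) ≤ ρ ^ 2 - 1 := by nlinarith
    have h3 : (ρ ^ 2 - 1) * ((1 / ρ) * Real.cos y - (t / ρ) * Real.sin y + 1) ≤
        (ρ ^ 2 - 1) * ((1 / ρ) * Real.cos x - (t / ρ) * Real.sin x + 1) := by
      nlinarith [mul_nonneg hρsq (show (0:ℝ) ≤
        ((1 / ρ) * Real.cos x - (t / ρ) * Real.sin x + 1) -
        ((1 / ρ) * Real.cos y - (t / ρ) * Real.sin y + 1) by linarith)]
    unfold S19F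
    have h4 : ((ρ ^ 2 - 1) * ((1 / ρ) * Real.cos y - (t / ρ) * Real.sin y + 1) + 4) / (4 * ρ) ≤
        ((ρ ^ 2 - 1) * ((1 / ρ) * Real.cos x - (t / ρ) * Real.sin x + 1) + 4) / (4 * ρ) := by
      gcongr
    nlinarith [mul_nonneg hπ.le (sub_nonneg.2 h4)]
  have hgmono : ∀ x y, 0 ≤ x → x ≤ y → y ≤ π → S19G x ≤ S19G y := by
    intro x y hx hxy hy
    have hcos : Real.cos y ≤ Real.cos x :=
      Real.cos_le_cos_of_nonneg_of_le_pi hx hy hxy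
    unfold S19G
    nlinarith
  refine ⟨key, ?_, ?_⟩
  · intro a ha b hb hab
    obtain ⟨ha1, ha2⟩ := ha
    obtain ⟨hb1, hb2⟩ := hb
    have ha0 : 0 ≤ a := hmin0.trans ha1
    have hb2' : b ≤ π / 2 := hb2.trans hmax2
    rw [hK' a, hK' b]
    by_cases hA : a < α₀
    · by_cases hB : b < α₀
      · rw [if_pos hA, if_pos hB]
        exact hfmono a b ha0 hab hb2'
      · rw [if_pos hA, if_neg hB]
        calc S19F ρ t a ≤ S19F ρ t α₀ := hfmono a α₀ ha0 hA.le (hα₀max.trans hmax2)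
          _ = S19G α₀ := hfg
          _ ≤ S19G b := hgmono α₀ b hα₀0 (not_lt.1 hB) (by linarith)
    · have hB : ¬ b < α₀ := fun h => hA (lt_of_le_of_lt hab h)
      rw [if_neg hA, if_neg hB]
      exact hgmono a b (hα₀0.trans (not_lt.1 hA)) hab (by linarith)
  · have hKc : Continuous K := by
      have hKeq : K = fun α => if α₀ ≤ α then S19G α else S19F ρ t α := by
        funext α
        rw [hK' α]
        by_cases h : α < α₀
        · rw [if_pos h, if_neg (not_le.2 h)]
        · rw [if_neg h, if_pos (not_lt.1 h)]
      rw [hKeq]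
      exact Continuous.if_le S19G_cont (S19F_cont ρ t) continuous_const continuous_id
        (fun x hx => by rw [← hx]; exact hfg.symm)
    exact hKc.continuousAt
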